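/- Let (A, φ, φ') be an infinitesimal noncommutative probability space with free cumulant functionals (κ_n)_{n≥1} and infinitesimal free cumulant functionals (κ'_n)_{n≥1}. Let φ̃ := φ + εφ' : A → G, and let (κ̃_n)_{n≥1} be the G-valued cumulant functionals of (A, φ̃). Then for every n ≥ 1 and all a_1, ..., a_n ∈ A one has Bo(κ̃_n(a_1, ..., a_n)) = κ_n(a_1, ..., a_n) and So(κ̃_n(a_1, ..., a_n)) = κ'_n(a_1, ..., a_n). -/

import Mathlib

namespace InfFree

open scoped BigOperators

/-- `π` is a partition of `Fin n` into nonempty blocks. -/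
def IsPartition {n : ℕ} (π : Finset (Finset (Fin n))) : Prop :=
  (∀ V ∈ π, V.Nonempty) ∧ ∀ i : Fin n, ∃! V : Finset (Fin n), V ∈ π ∧ i ∈ V

/-- `π` is non-crossing: there are no `p < q < r < s` with `p, r` in one block and
`q, s` in another block. -/
def IsNonCrossing {n : ℕ} (π : Finset (Finset (Fin n))) : Prop :=
  ∀ p q r s : Fin n, p < q → q < r → r < s →
    ∀ V ∈ π, ∀ W ∈ π, p ∈ V → r ∈ V → q ∈ W → s ∈ W → V = W

open Classical in
/-- The finset `NC n` of non-crossing partitions of `Fin n`. -/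
noncomputable def NC (n : ℕ) : Finset (Finset (Finset (Fin n))) :=
  Finset.univ.filter fun π => IsPartition π ∧ IsNonCrossing π

/-- Restriction of an `n`-tuple to a subset `V ⊆ Fin n`, listed in increasing order. -/
def restrict {α : Type*} {n : ℕ} (a : Fin n → α) (V : Finset (Fin n)) :
    Fin V.card → α :=
  fun i => a (V.orderIsoOfFin rfl i).1

/-- `κ` is the family of `R`-valued non-crossing cumulant functionals of `φ`, i.e.
the moment-cumulant formulas hold. -/
def MomentCumulant {A : Type*} [Ring A] {R : Type*} [CommRing R]
    (φ : A → R) (κ : ∀ n : ℕ, (Fin n → A) → R) : Prop :=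
  ∀ (n : ℕ), 1 ≤ n → ∀ a : Fin n → A,
    φ (List.ofFn a).prod = ∑ π ∈ NC n, ∏ V ∈ π, κ V.card (restrict a V)

/-- `κ'` is the family of infinitesimal non-crossing cumulant functionals of
`(φ, φ')`, where `κ` is the family of non-crossing cumulant functionals of `φ`. -/
def InfMomentCumulant {A : Type*} [Ring A]
    (φ' : A → ℂ) (κ κ' : ∀ n : ℕ, (Fin n → A) → ℂ) : Prop :=
  ∀ (n : ℕ), 1 ≤ n → ∀ a : Fin n → A,
    φ' (List.ofFn a).prod =
      ∑ π ∈ NC n, ∑ V ∈ π,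
        κ' V.card (restrict a V) * ∏ W ∈ π.erase V, κ W.card (restrict a W)

/-- Consecutive indices are distinct. -/
def Alternating {n k : ℕ} (i : Fin n → Fin k) : Prop :=
  ∀ (m : ℕ) (h : m + 1 < n), i ⟨m, Nat.lt_of_succ_lt h⟩ ≠ i ⟨m + 1, h⟩

/-- Freeness of the family of subsets `S` with respect to `φ`. -/
def FreeSets {A : Type*} [Ring A] {k : ℕ} (φ : A → ℂ) (S : Fin k → Set A) : Prop :=
  ∀ (n : ℕ), 1 ≤ n → ∀ i : Fin n → Fin k, Alternating i →
    ∀ a : Fin n → A, (∀ m, a m ∈ S (i m)) → (∀ m, φ (a m) = 0) →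
      φ (List.ofFn a).prod = 0

/-- Infinitesimal freeness of the family of subsets `S` with respect to `(φ, φ')`. -/
def InfFreeSets {A : Type*} [Ring A] {k : ℕ} (φ φ' : A → ℂ) (S : Fin k → Set A) : Prop :=
  ∀ (n : ℕ) (hn : 1 ≤ n) (i : Fin n → Fin k), Alternating i →
    ∀ a : Fin n → A, (∀ m, a m ∈ S (i m)) → (∀ m, φ (a m) = 0) →
      φ (List.ofFn a).prod = 0 ∧
      ((Odd n ∧ ∀ m : Fin n, i m = i m.rev) →
        φ' (List.ofFn a).prod =
          (∏ j : Fin ((n - 1) / 2),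
              φ (a ⟨j, by have := j.isLt; omega⟩ *
                 a ⟨n - 1 - j, by have := j.isLt; omega⟩)) *
            φ' (a ⟨n / 2, by omega⟩)) ∧
      (¬(Odd n ∧ ∀ m : Fin n, i m = i m.rev) → φ' (List.ofFn a).prod = 0)

/-- The one-block partition is in `NC n`. -/
lemma univ_mem_NC (n : ℕ) (hn : 1 ≤ n) :
    ({Finset.univ} : Finset (Finset (Fin n))) ∈ NC n := by
  have : Nonempty (Fin n) := ⟨⟨0, hn⟩⟩
  simp only [NC, Finset.mem_filter, Finset.mem_univ, true_and]
  refine ⟨⟨?_, ?_⟩, ?_⟩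
  · intro V hV
    rw [Finset.mem_singleton] at hV
    subst hV; exact Finset.univ_nonempty
  · intro i
    exact ⟨Finset.univ, ⟨Finset.mem_singleton_self _, Finset.mem_univ i⟩,
      fun V hV => Finset.mem_singleton.mp hV.1⟩
  · intro p q r s _ _ _ V hV W hW _ _ _ _
    rw [Finset.mem_singleton] at hV hW; rw [hV, hW]

/-- A block of a partition other than the one-block partition has card `< n`. -/
lemma block_card_lt {n : ℕ} {π : Finset (Finset (Fin n))} (hπ : π ∈ NC n)
    (hne : π ≠ {Finset.univ}) {V : Finset (Fin n)} (hV : V ∈ π) : V.card < n := by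
  classical
  have hP : IsPartition π := by
    simp only [NC, Finset.mem_filter] at hπ; exact hπ.2.1
  rcases lt_or_eq_of_le (Finset.card_le_card (Finset.subset_univ V)) with h | h
  · simpa using h
  · exfalso
    have hVuniv : V = Finset.univ := Finset.eq_univ_of_card V (by simpa using h)
    apply hne
    rw [Finset.eq_singleton_iff_unique_mem]
    refine ⟨hVuniv ▸ hV, fun W hW => ?_⟩
    obtain ⟨i, hi⟩ := hP.1 W hW
    obtain ⟨U, _, hU⟩ := hP.2 i
    rw [hU W ⟨hW, hi⟩, ← hU V ⟨hV, hVuniv ▸ Finset.mem_univ i⟩, hVuniv]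

lemma block_card_pos {n : ℕ} {π : Finset (Finset (Fin n))} (hπ : π ∈ NC n)
    {V : Finset (Fin n)} (hV : V ∈ π) : 1 ≤ V.card := by
  have hP : IsPartition π := by
    simp only [NC, Finset.mem_filter] at hπ; exact hπ.2.1
  exact Finset.card_pos.mpr (hP.1 V hV)

/-- Evaluating a functional family on `restrict a univ` gives its value on `a`. -/
lemma restrict_univ_eval {A : Type*} {R : Type*} {n : ℕ} (a : Fin n → A)
    (F : ∀ k : ℕ, (Fin k → A) → R) :
    F (Finset.univ : Finset (Fin n)).card (restrict a Finset.univ) = F n a := by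
  have hc : (Finset.univ : Finset (Fin n)).card = n := by simp
  have hr : restrict a Finset.univ = fun i => a (Fin.cast hc i) := by
    have h : (fun i : Fin (Finset.univ : Finset (Fin n)).card => Fin.cast hc i)
        = (Finset.univ : Finset (Fin n)).orderEmbOfFin rfl := by
      apply Finset.orderEmbOfFin_unique
      · intro x; simp
      · exact fun x y h => h
    funext i
    show a _ = _
    rw [Finset.coe_orderIsoOfFin_apply, ← h]
  rw [hr]
  have : ∀ (m : ℕ) (h : m = n),
      F m (fun i => a (Fin.cast h i)) = F n a := by
    intro m h; subst h; simp
  exact this _ hc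

/-- Second component of a finite product of dual numbers. -/
lemma snd_prod {ι : Type*} [DecidableEq ι] (s : Finset ι) (f : ι → DualNumber ℂ) :
    (∏ i ∈ s, f i).snd
      = ∑ i ∈ s, (f i).snd * ∏ j ∈ s.erase i, (f j).fst := by
  classical
  induction s using Finset.induction_on with
  | empty => simp
  | insert _ _ ha ih =>
    rename_i b s
    rw [Finset.prod_insert ha, TrivSqZeroExt.snd_mul, Finset.sum_insert ha]
    rw [Finset.erase_insert ha, ih]
    have hfst : (∏ i ∈ s, f i).fst = ∏ i ∈ s, (f i).fst :=
      map_prod (TrivSqZeroExt.fstHom ℂ ℂ ℂ) f s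
    rw [smul_eq_mul, op_smul_eq_mul, hfst, Finset.mul_sum, add_comm]
    congr 1
    apply Finset.sum_congr rfl
    intro i hi
    rw [Finset.erase_insert_of_ne (by rintro rfl; exact ha hi),
      Finset.prod_insert (fun h => ha (Finset.mem_of_mem_erase h))]
    ring

/-- For `φ̃ = φ + ε φ' : A → G`, the body of the G-valued cumulant
`κ̃_n` is `κ_n` and its soul is `κ'_n`. -/
theorem grassmann_cumulant_body_soul
    {A : Type*} [Ring A] [Algebra ℂ A]
    (φ φ' : A →ₗ[ℂ] ℂ) (hφ1 : φ 1 = 1) (hφ'1 : φ' 1 = 0)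
    (κ κ' : ∀ n : ℕ, (Fin n → A) → ℂ)
    (hκ : MomentCumulant (⇑φ) κ) (hκ' : InfMomentCumulant (⇑φ') κ κ')
    (κg : ∀ n : ℕ, (Fin n → A) → DualNumber ℂ)
    (hκg : MomentCumulant
      (fun a : A => (TrivSqZeroExt.inl (φ a) + TrivSqZeroExt.inr (φ' a) : DualNumber ℂ))
      κg) :
    ∀ (n : ℕ), 1 ≤ n → ∀ a : Fin n → A,
      TrivSqZeroExt.fst (κg n a) = κ n a ∧
      TrivSqZeroExt.snd (κg n a) = κ' n a := by
  intro n
  induction n using Nat.strong_induction_on with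
  | _ n IH =>
  intro hn a
  classical
  have hugt := univ_mem_NC n hn
  have hκn := hκ n hn a
  have hκ'n := hκ' n hn a
  have hκgn := hκg n hn a
  rw [← Finset.add_sum_erase _ _ hugt] at hκn hκ'n hκgn
  rw [Finset.prod_singleton, restrict_univ_eval a κ] at hκn
  rw [Finset.prod_singleton, restrict_univ_eval a κg] at hκgn
  rw [Finset.sum_singleton, Finset.erase_singleton, Finset.prod_empty, mul_one,
    restrict_univ_eval a κ'] at hκ'n
  set E := (NC n).erase {(Finset.univ : Finset (Fin n))} with hE
  have hIH : ∀ π ∈ E, ∀ V ∈ π,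
      TrivSqZeroExt.fst (κg V.card (restrict a V)) = κ V.card (restrict a V) ∧
      TrivSqZeroExt.snd (κg V.card (restrict a V)) = κ' V.card (restrict a V) := by
    intro π hπ V hV
    have hπ' := Finset.mem_of_mem_erase hπ
    have hlt := block_card_lt hπ' (Finset.ne_of_mem_erase hπ) hV
    exact IH V.card hlt (block_card_pos hπ' hV) _
  have hfst_sum : TrivSqZeroExt.fst (∑ π ∈ E, ∏ V ∈ π, κg V.card (restrict a V))
      = ∑ π ∈ E, ∏ V ∈ π, κ V.card (restrict a V) := by
    rw [TrivSqZeroExt.fst_sum]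
    refine Finset.sum_congr rfl fun π hπ => ?_
    have : TrivSqZeroExt.fst (∏ V ∈ π, κg V.card (restrict a V))
        = ∏ V ∈ π, TrivSqZeroExt.fst (κg V.card (restrict a V)) :=
      map_prod (TrivSqZeroExt.fstHom ℂ ℂ ℂ) _ π
    rw [this]
    exact Finset.prod_congr rfl fun V hV => (hIH π hπ V hV).1
  have hsnd_sum : TrivSqZeroExt.snd (∑ π ∈ E, ∏ V ∈ π, κg V.card (restrict a V))
      = ∑ π ∈ E, ∑ V ∈ π,
          κ' V.card (restrict a V) * ∏ W ∈ π.erase V, κ W.card (restrict a W) := by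
    rw [TrivSqZeroExt.snd_sum]
    refine Finset.sum_congr rfl fun π hπ => ?_
    rw [snd_prod]
    refine Finset.sum_congr rfl fun V hV => ?_
    rw [(hIH π hπ V hV).2]
    congr 1
    exact Finset.prod_congr rfl fun W hW =>
      (hIH π hπ W (Finset.mem_of_mem_erase hW)).1
  have h2 := congrArg TrivSqZeroExt.fst hκgn
  simp only [TrivSqZeroExt.fst_add, TrivSqZeroExt.fst_inl, TrivSqZeroExt.fst_inr,
    add_zero] at h2
  rw [hfst_sum] at h2
  have h3 := congrArg TrivSqZeroExt.snd hκgn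
  simp only [TrivSqZeroExt.snd_add, TrivSqZeroExt.snd_inl, TrivSqZeroExt.snd_inr,
    zero_add] at h3
  rw [hsnd_sum] at h3
  constructor
  · have := h2.symm.trans hκn
    exact add_right_cancel this
  · have := h3.symm.trans hκ'n
    exact add_right_cancel this


end InfFree
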